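/- arXiv:2005.09491 — 3 statements merged into one kernel-verified Lean document; each statement's English description precedes it below -/
import Mathlib

section
/- In the setting of Dedekind–Kummer with p ∤ disc(g) and 𝔭_i = (p, h_i(α)), if β = b(α) for b ∈ ℤ[X] and 𝔭_i = (p, β), then the reduction of h_i mod p equals gcd(g mod p, b mod p) in F_p[X] (up to a unit, i.e., as monic polynomials). -/
open Polynomial NumberField Ideal

/-- The discriminant of a monic integral polynomial `g`, defined as
`(-1)^(n(n-1)/2) · N_{ℤ[X]/(g) / ℤ}(g'(x))`, which for monic `g` agrees with
`(-1)^(n(n-1)/2) · Res(g, g')`. -/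
noncomputable def polyDisc (g : Polynomial ℤ) : ℤ :=
  (-1) ^ (g.natDegree * (g.natDegree - 1) / 2) *
    Algebra.norm ℤ (AdjoinRoot.mk g (derivative g))

/-- In the Dedekind–Kummer setting with `p ∤ disc(g)` and
`𝔭 i = (p, h i (α))`: if `β = b(α)` for `b ∈ ℤ[X]` and `𝔭 i = (p, β)`, then the reduction
of `h i` mod `p` equals `gcd(g mod p, b mod p)` in `F_p[X]` (as monic polynomials, i.e. as
the normalized gcd). -/
theorem reduction_eq_gcd_of_generator
    (K : Type*) [Field K] [NumberField K] (α : 𝓞 K)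
    (hadj : Algebra.adjoin ℚ {(algebraMap (𝓞 K) K α)} = ⊤)
    (g : Polynomial ℤ) (hg : g = minpoly ℤ α)
    (p : ℕ) [hp : Fact p.Prime] (hdisc : ¬ ((p : ℤ) ∣ polyDisc g))
    (r : ℕ) (h : Fin r → Polynomial ℤ)
    (hmonic : ∀ i, (h i).Monic)
    (hirr : ∀ i, Irreducible ((h i).map (Int.castRingHom (ZMod p))))
    (hdist : ∀ i j, i ≠ j →
      (h i).map (Int.castRingHom (ZMod p)) ≠ (h j).map (Int.castRingHom (ZMod p)))
    (hfact : g.map (Int.castRingHom (ZMod p)) =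
      ∏ i, (h i).map (Int.castRingHom (ZMod p)))
    (𝔭 : Fin r → Ideal (𝓞 K))
    (h𝔭 : ∀ i, 𝔭 i = Ideal.span {(p : 𝓞 K), Polynomial.aeval α (h i)})
    (i : Fin r) (b : Polynomial ℤ) (β : 𝓞 K) (hβ : β = Polynomial.aeval α b)
    (hgen : 𝔭 i = Ideal.span {(p : 𝓞 K), β}) :
    (h i).map (Int.castRingHom (ZMod p)) =
      gcd (g.map (Int.castRingHom (ZMod p))) (b.map (Int.castRingHom (ZMod p))) := by
  classical
  set c : ℤ →+* ZMod p := Int.castRingHom (ZMod p) with hc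
  have hint : IsIntegral ℤ α := IsIntegralClosure.isIntegral ℤ K α
  -- the reduction of g is separable
  have hsep : (g.map c).Separable := by
    rw [hfact]
    refine separable_prod ?_ (fun j => PerfectField.separable_of_irreducible (hirr j))
    intro j k hjk
    simp only [Function.onFun]
    rw [(hirr j).coprime_iff_not_dvd]
    intro hdvd
    exact hdist j k hjk (eq_of_monic_of_associated ((hmonic j).map c) ((hmonic k).map c)
      ((hirr j).associated_of_dvd (hirr k) hdvd))
  -- each h j divides g mod p
  have hjdvdg : ∀ j : Fin r, (h j).map c ∣ g.map c := by
    intro j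
    rw [hfact]
    exact Finset.dvd_prod_of_mem _ (Finset.mem_univ j)
  -- conductor fact: g'(α) multiplies 𝓞 K into ℤ[α]
  have hcond : ∀ u : 𝓞 K, Polynomial.aeval α (derivative g) * u ∈
      Algebra.adjoin ℤ {α} := by
    have h1 := conductor_mul_differentIdeal ℤ ℚ K α hadj
    have h2 : Polynomial.aeval α (derivative (minpoly ℤ α)) ∈ conductor ℤ α := by
      have h3 : Polynomial.aeval α (derivative (minpoly ℤ α)) ∈
          Ideal.span {Polynomial.aeval α (derivative (minpoly ℤ α))} :=
        Ideal.mem_span_singleton_self _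
      rw [← h1] at h3
      exact (Ideal.mul_le_left : conductor ℤ α * differentIdeal ℤ (𝓞 K) ≤ _) h3
    intro u
    subst hg
    exact mem_conductor_iff.mp h2 u
  -- Key lemma (hard direction): if f(α) ∈ (p, h j (α)) then h̄ j ∣ f̄.
  have key : ∀ (j : Fin r) (f : Polynomial ℤ),
      Polynomial.aeval α f ∈ Ideal.span {(p : 𝓞 K), Polynomial.aeval α (h j)} →
      (h j).map c ∣ f.map c := by
    intro j f hf
    obtain ⟨u, v, huv⟩ := Ideal.mem_span_pair.mp hf
    -- multiply by g'(α)
    obtain ⟨U, hU⟩ : ∃ U : Polynomial ℤ, Polynomial.aeval α U =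
        Polynomial.aeval α (derivative g) * u := by
      have := hcond u
      rw [Algebra.adjoin_singleton_eq_range_aeval] at this
      exact this
    obtain ⟨V, hV⟩ : ∃ V : Polynomial ℤ, Polynomial.aeval α V =
        Polynomial.aeval α (derivative g) * v := by
      have := hcond v
      rw [Algebra.adjoin_singleton_eq_range_aeval] at this
      exact this
    have hzero : Polynomial.aeval α (derivative g * f - U * C (p : ℤ) - V * h j) = 0 := by
      simp only [map_sub, _root_.map_mul, aeval_C, algebraMap_int_eq, map_natCast]
      rw [hU, hV]
      linear_combination (-(Polynomial.aeval α (derivative g))) * huv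
    have hdvd : g ∣ derivative g * f - U * C (p : ℤ) - V * h j := by
      rw [hg]
      exact minpoly.isIntegrallyClosed_dvd hint (hg ▸ hzero)
    obtain ⟨w, hw⟩ := hdvd
    -- reduce mod p
    have hred : ((derivative g).map c) * f.map c =
        (g.map c) * w.map c + (V.map c) * (h j).map c := by
      have hthis := congrArg (Polynomial.map c) hw
      simp only [Polynomial.map_sub, Polynomial.map_mul, Polynomial.map_C] at hthis
      have hcp : (c (p : ℤ)) = 0 := by
        simp [hc, ZMod.natCast_self]
      rw [hcp, Polynomial.C_0, mul_zero, sub_zero] at hthis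
      linear_combination hthis
    have hjdvd : (h j).map c ∣ ((derivative g).map c) * f.map c := by
      rw [hred]
      exact dvd_add (dvd_mul_of_dvd_left (hjdvdg j) _) (dvd_mul_left _ _)
    -- h̄ j is coprime to ḡ'
    have hcop : IsCoprime ((h j).map c) ((derivative g).map c) := by
      have hsep' : IsCoprime (g.map c) ((derivative g).map c) := by
        have := hsep
        unfold Polynomial.Separable at this
        rwa [derivative_map] at this
      exact IsCoprime.of_isCoprime_of_dvd_left hsep' (hjdvdg j)
    exact hcop.dvd_of_dvd_mul_left hjdvd
  -- Easy direction: if h̄ j ∣ f̄ then f(α) ∈ (p, h j (α)).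
  have easy : ∀ (j : Fin r) (f : Polynomial ℤ), (h j).map c ∣ f.map c →
      Polynomial.aeval α f ∈ Ideal.span {(p : 𝓞 K), Polynomial.aeval α (h j)} := by
    intro j f hf
    obtain ⟨q', hq'⟩ := hf
    obtain ⟨q, rfl⟩ := Polynomial.map_surjective c ZMod.intCast_surjective q'
    have hdvd : C (p : ℤ) ∣ f - h j * q := by
      rw [Polynomial.C_dvd_iff_dvd_coeff]
      intro n
      rw [← ZMod.intCast_zmod_eq_zero_iff_dvd]
      have : ((f - h j * q).map c).coeff n = 0 := by
        rw [Polynomial.map_sub, Polynomial.map_mul, hq']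
        simp [mul_comm]
      rwa [Polynomial.coeff_map] at this
    obtain ⟨s, hs⟩ := hdvd
    have hfeq : f = h j * q + C (p : ℤ) * s := by linear_combination hs
    rw [hfeq]
    rw [Ideal.mem_span_pair]
    refine ⟨Polynomial.aeval α s, Polynomial.aeval α q, ?_⟩
    simp only [map_add, _root_.map_mul, aeval_C, algebraMap_int_eq, map_natCast]
    ring
  -- h̄ i divides b̄
  have hib : (h i).map c ∣ b.map c := by
    apply key i
    rw [← h𝔭 i, hgen, ← hβ]
    exact Ideal.subset_span (by simp)
  -- for j ≠ i, h̄ j does not divide b̄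
  have hnjb : ∀ j : Fin r, j ≠ i → ¬ ((h j).map c ∣ b.map c) := by
    intro j hji hdvd
    have hβj : β ∈ 𝔭 j := by
      rw [hβ, h𝔭 j]
      exact easy j b hdvd
    have hle : 𝔭 i ≤ 𝔭 j := by
      rw [hgen, Ideal.span_le]
      intro x hx
      simp only [Set.mem_insert_iff, Set.mem_singleton_iff] at hx
      rcases hx with rfl | rfl
      · rw [h𝔭 j]
        exact Ideal.subset_span (by simp)
      · exact hβj
    have hhi : Polynomial.aeval α (h i) ∈ 𝔭 j := by
      apply hle
      rw [h𝔭 i]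
      exact Ideal.subset_span (by simp)
    rw [h𝔭 j] at hhi
    have := key j (h i) hhi
    exact hdist j i (hji) (eq_of_monic_of_associated ((hmonic j).map c) ((hmonic i).map c)
      ((hirr j).associated_of_dvd (hirr i) this))
  -- now compute the gcd
  set d := gcd (g.map c) (b.map c) with hd
  have hid : (h i).map c ∣ d := dvd_gcd (hjdvdg i) hib
  have hdi : d ∣ (h i).map c := by
    have hprod : g.map c = (h i).map c * ∏ j ∈ Finset.univ.erase i, (h j).map c := by
      rw [hfact]
      exact (Finset.mul_prod_erase _ _ (Finset.mem_univ i)).symm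
    have hdg : d ∣ (h i).map c * ∏ j ∈ Finset.univ.erase i, (h j).map c :=
      hprod ▸ gcd_dvd_left _ _
    have hcop : IsCoprime d (∏ j ∈ Finset.univ.erase i, (h j).map c) := by
      apply IsCoprime.prod_right
      intro j hj
      have hji : j ≠ i := (Finset.mem_erase.mp hj).1
      have : ¬ ((h j).map c ∣ d) := by
        intro hjd
        exact hnjb j hji (hjd.trans (gcd_dvd_right _ _))
      exact ((hirr j).coprime_iff_not_dvd.mpr this).symm
    exact hcop.dvd_of_dvd_mul_right hdg
  have hassoc : Associated ((h i).map c) d := associated_of_dvd_dvd hid hdi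
  have hdmonic : d.Monic := by
    have hne : d ≠ 0 := by
      intro h0
      exact (hirr i).ne_zero (zero_dvd_iff.mp (h0 ▸ hdi))
    have := normalize_gcd (g.map c) (b.map c)
    rw [← hd] at this
    rw [← this]
    exact Polynomial.monic_normalize hne
  exact eq_of_monic_of_associated ((hmonic i).map c) hdmonic hassoc
end

section
/- In the unramified Dedekind–Kummer setting, for β = b(α) generating 𝔭_i = (p, β) together with p, the 𝔭_i-adic valuation of β is positive, while for every other prime 𝔭_j above p (j ≠ i) the 𝔭_j-adic valuation of β is zero. -/
open Polynomial NumberField Ideal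

open scoped nonZeroDivisors

lemma disc_smul_mem (K : Type*) [Field K] [NumberField K] (α : 𝓞 K)
    (hadj : Algebra.adjoin ℚ {(algebraMap (𝓞 K) K α)} = ⊤)
    (g : Polynomial ℤ) (hg : g = minpoly ℤ α) (x : 𝓞 K) :
    ∃ q : Polynomial ℤ, (polyDisc g : 𝓞 K) * x = Polynomial.aeval α q := by
  set α' : K := algebraMap (𝓞 K) K α with hα'
  have hint : IsIntegral ℤ α := IsIntegralClosure.isIntegral ℤ K α
  have hgm : g.Monic := hg ▸ minpoly.monic hint
  have hα'int : IsIntegral ℤ α' := RingOfIntegers.isIntegral_coe α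
  have hQint : IsIntegral ℚ α' := hα'int.tower_top
  have hmin : minpoly ℚ α' = g.map (algebraMap ℤ ℚ) := by
    rw [hg, hα']
    exact minpoly.isIntegrallyClosed_eq_field_fractions ℚ K hint
  have hroot : g.eval₂ (algebraMap ℤ K) α' = 0 := by
    rw [← aeval_def, hα', aeval_algebraMap_apply, hg, minpoly.aeval, map_zero]
  -- the map ℤ[X]/(g) → K
  letI : Algebra (AdjoinRoot g) K := (AdjoinRoot.lift (algebraMap ℤ K) α' hroot).toAlgebra
  have halg : ∀ q : Polynomial ℤ,
      algebraMap (AdjoinRoot g) K (AdjoinRoot.mk g q) = aeval α' q := by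
    intro q
    show AdjoinRoot.lift (algebraMap ℤ K) α' hroot (AdjoinRoot.mk g q) = _
    rw [AdjoinRoot.lift_mk, aeval_def]
  haveI : IsScalarTower ℤ (AdjoinRoot g) K :=
    IsScalarTower.of_algebraMap_eq fun n => by
      rw [show algebraMap ℤ K = (algebraMap (AdjoinRoot g) K).comp (algebraMap ℤ (AdjoinRoot g))
        from Subsingleton.elim _ _]; rfl
  have hinj : Function.Injective (algebraMap (AdjoinRoot g) K) := by
    intro a b hab
    obtain ⟨qa, rfl⟩ := AdjoinRoot.mk_surjective a
    obtain ⟨qb, rfl⟩ := AdjoinRoot.mk_surjective b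
    rw [halg, halg] at hab
    rw [AdjoinRoot.mk_eq_mk, hg]
    refine minpoly.isIntegrallyClosed_dvd hint ?_
    have : aeval α' (qa - qb) = 0 := by rw [map_sub, hab, sub_self]
    rw [hα', aeval_algebraMap_apply] at this
    exact RingOfIntegers.coe_injective (by simpa using this)
  haveI : IsLocalization (Algebra.algebraMapSubmonoid (AdjoinRoot g) ℤ⁰) K := by
    refine ⟨⟨?_, ?_, ?_⟩⟩
    · rintro ⟨_, n, hn, rfl⟩
      rw [← IsScalarTower.algebraMap_apply]
      have : (n : ℚ) ≠ 0 := Int.cast_ne_zero.mpr (nonZeroDivisors.ne_zero hn)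
      simp only [algebraMap_int_eq, eq_intCast, isUnit_iff_ne_zero, ne_eq, Int.cast_eq_zero]
      exact nonZeroDivisors.ne_zero hn
    · intro z
      have hz : z ∈ Algebra.adjoin ℚ {α'} := hadj ▸ trivial
      rw [Algebra.adjoin_singleton_eq_range_aeval] at hz
      obtain ⟨q, hq'⟩ := hz
      replace hq' : aeval α' q = z := hq'
      obtain ⟨b, hb⟩ := IsLocalization.integerNormalization_map_to_map ℤ⁰ q
      refine ⟨⟨AdjoinRoot.mk g (IsLocalization.integerNormalization ℤ⁰ q),
        ⟨algebraMap ℤ (AdjoinRoot g) b, b, b.2, rfl⟩⟩, ?_⟩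
      simp only [halg]
      rw [← IsScalarTower.algebraMap_apply, ← aeval_map_algebraMap (R := ℤ) ℚ α', hb,
        map_zsmul, hq']
      simp [zsmul_eq_mul, mul_comm]
    · intro a b hab
      exact ⟨1, by rw [hinj hab]⟩
  haveI : Module.Free ℤ (AdjoinRoot g) := Module.Free.of_basis (AdjoinRoot.powerBasis' hgm).basis
  haveI : Module.Finite ℤ (AdjoinRoot g) := Module.Finite.of_basis (AdjoinRoot.powerBasis' hgm).basis
  -- the power basis of K over ℚ generated by α'
  let pb : PowerBasis ℚ K := (Algebra.adjoin.powerBasis hQint).map <|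
    (Subalgebra.equivOfEq _ _ hadj).trans Subalgebra.topEquiv
  have hpbgen : pb.gen = α' := rfl
  have hdim : Module.finrank ℚ K = g.natDegree := by
    have hdd : pb.dim = (minpoly ℚ α').natDegree := rfl
    rw [pb.finrank, hdd, hmin, hgm.natDegree_map]
  have hdisc : algebraMap ℤ ℚ (polyDisc g) = Algebra.discr ℚ pb.basis := by
    rw [Algebra.discr_powerBasis_eq_norm, hpbgen, hmin, derivative_map,
      aeval_map_algebraMap, ← halg, Algebra.norm_localization ℤ ℤ⁰, hdim, polyDisc]
    push_cast
    ring
  have hzint : IsIntegral ℤ (algebraMap (𝓞 K) K x) := RingOfIntegers.isIntegral_coe x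
  have H := Algebra.discr_mul_isIntegral_mem_adjoin (R := ℤ) (K := ℚ) (L := K)
      (B := pb) (hpbgen ▸ hα'int) hzint
  rw [← hdisc, hpbgen, Algebra.adjoin_singleton_eq_range_aeval] at H
  obtain ⟨q, hq⟩ := H
  replace hq : aeval α' q = algebraMap ℤ ℚ (polyDisc g) • algebraMap (𝓞 K) K x := hq
  refine ⟨q, RingOfIntegers.coe_injective ?_⟩
  rw [_root_.map_mul, ← aeval_algebraMap_apply, ← hα', hq, Algebra.smul_def,
    ← IsScalarTower.algebraMap_apply ℤ ℚ K]
  congr 1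

/-- In the unramified Dedekind–Kummer setting, for `β = b(α)` generating
`𝔭 i = (p, β)` together with `p`, the `𝔭 i`-adic valuation of `β` is positive, while for
every other prime `𝔭 j` above `p` (`j ≠ i`) the `𝔭 j`-adic valuation of `β` is zero.
(Here the `𝔭`-adic valuation of `β` is the multiplicity of `𝔭` in the ideal `(β)`.) -/
theorem valuation_of_generator
    (K : Type*) [Field K] [NumberField K] (α : 𝓞 K)
    (hadj : Algebra.adjoin ℚ {(algebraMap (𝓞 K) K α)} = ⊤)
    (g : Polynomial ℤ) (hg : g = minpoly ℤ α)
    (p : ℕ) (hp : p.Prime) (hdisc : ¬ ((p : ℤ) ∣ polyDisc g))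
    (r : ℕ) (h : Fin r → Polynomial ℤ)
    (hmonic : ∀ i, (h i).Monic)
    (hirr : ∀ i, Irreducible ((h i).map (Int.castRingHom (ZMod p))))
    (hdist : ∀ i j, i ≠ j →
      (h i).map (Int.castRingHom (ZMod p)) ≠ (h j).map (Int.castRingHom (ZMod p)))
    (hfact : g.map (Int.castRingHom (ZMod p)) =
      ∏ i, (h i).map (Int.castRingHom (ZMod p)))
    (𝔭 : Fin r → Ideal (𝓞 K))
    (h𝔭 : ∀ i, 𝔭 i = Ideal.span {(p : 𝓞 K), Polynomial.aeval α (h i)})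
    (i : Fin r) (b : Polynomial ℤ) (β : 𝓞 K) (hβ : β = Polynomial.aeval α b)
    (hgen : 𝔭 i = Ideal.span {(p : 𝓞 K), β}) :
    0 < emultiplicity (𝔭 i) (Ideal.span {β}) ∧
      ∀ j, j ≠ i → emultiplicity (𝔭 j) (Ideal.span {β}) = 0 := by
  haveI := Fact.mk hp
  have hpmem : ∀ j, (p : 𝓞 K) ∈ 𝔭 j := fun j => by
    rw [h𝔭 j]; exact subset_span (by simp)
  have hhmem : ∀ j, Polynomial.aeval α (h j) ∈ 𝔭 j := fun j => by
    rw [h𝔭 j]; exact subset_span (by simp)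
  have hβmem : β ∈ 𝔭 i := by rw [hgen]; exact subset_span (by simp)
  -- each 𝔭 j is a proper ideal
  have hproper : ∀ j, 𝔭 j ≠ ⊤ := by
    intro j hTop
    have h1 : (1 : 𝓞 K) ∈ Ideal.span {(p : 𝓞 K), Polynomial.aeval α (h j)} := by
      rw [← h𝔭 j, hTop]; trivial
    rw [Ideal.mem_span_pair] at h1
    obtain ⟨x, y, hxy⟩ := h1
    obtain ⟨u, hu⟩ := disc_smul_mem K α hadj g hg x
    obtain ⟨v, hv⟩ := disc_smul_mem K α hadj g hg y
    have hDα : (polyDisc g : 𝓞 K) = Polynomial.aeval α (C (p : ℤ) * u + h j * v) := by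
      have e : Polynomial.aeval α (C (p : ℤ) * u + h j * v)
          = (p : 𝓞 K) * ((polyDisc g : 𝓞 K) * x)
            + Polynomial.aeval α (h j) * ((polyDisc g : 𝓞 K) * y) := by
        rw [map_add, _root_.map_mul, _root_.map_mul, aeval_C, hu, hv]
        push_cast
        ring
      rw [e]
      linear_combination -(polyDisc g : 𝓞 K) * hxy
    have hdvd : g ∣ (C (p : ℤ) * u + h j * v - C (polyDisc g)) := by
      rw [hg]
      refine minpoly.isIntegrallyClosed_dvd (IsIntegralClosure.isIntegral ℤ K α) ?_
      rw [map_sub, aeval_C, ← hg, ← hDα]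
      simp
    obtain ⟨w, hw⟩ := hdvd
    have hmap := congrArg (Polynomial.map (Int.castRingHom (ZMod p))) hw
    have hp0 : (Int.castRingHom (ZMod p)) (p : ℤ) = 0 := by
      simp
    simp only [Polynomial.map_sub, Polynomial.map_add, Polynomial.map_mul,
      Polynomial.map_C, hp0, map_zero, zero_mul, zero_add] at hmap
    have hgdvd : (h j).map (Int.castRingHom (ZMod p)) ∣ g.map (Int.castRingHom (ZMod p)) := by
      rw [hfact]; exact Finset.dvd_prod_of_mem _ (Finset.mem_univ j)
    have hjdvd : (h j).map (Int.castRingHom (ZMod p)) ∣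
        C ((Int.castRingHom (ZMod p)) (polyDisc g)) := by
      have key : C ((Int.castRingHom (ZMod p)) (polyDisc g)) =
          (h j).map (Int.castRingHom (ZMod p)) * v.map (Int.castRingHom (ZMod p))
            - g.map (Int.castRingHom (ZMod p)) * w.map (Int.castRingHom (ZMod p)) := by
        linear_combination -hmap
      rw [key]
      exact dvd_sub (dvd_mul_right _ _) (hgdvd.mul_right _)
    have hD0 : (Int.castRingHom (ZMod p)) (polyDisc g) = 0 := by
      by_contra hne
      exact (hirr j).not_isUnit
        (isUnit_of_dvd_unit hjdvd (Polynomial.isUnit_C.mpr (Ne.isUnit hne)))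
    rw [eq_intCast, ZMod.intCast_zmod_eq_zero_iff_dvd] at hD0
    exact hdisc (by exact_mod_cast hD0)
  -- comaximality
  have hcomax : ∀ j, j ≠ i → 𝔭 i ⊔ 𝔭 j = ⊤ := by
    intro j hji
    have hne : (h i).map (Int.castRingHom (ZMod p)) ≠ (h j).map (Int.castRingHom (ZMod p)) :=
      hdist i j (fun e => hji e.symm)
    have hcop : IsCoprime ((h i).map (Int.castRingHom (ZMod p)))
        ((h j).map (Int.castRingHom (ZMod p))) := by
      rw [(hirr i).coprime_iff_not_dvd]
      intro hdvd
      exact hne (Polynomial.eq_of_monic_of_associated ((hmonic i).map _) ((hmonic j).map _)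
        ((hirr i).associated_of_dvd (hirr j) hdvd))
    obtain ⟨a, c, hac⟩ := hcop
    obtain ⟨a₀, rfl⟩ := Polynomial.map_surjective (Int.castRingHom (ZMod p))
      (by exact ZMod.intCast_surjective) a
    obtain ⟨c₀, rfl⟩ := Polynomial.map_surjective (Int.castRingHom (ZMod p))
      (by exact ZMod.intCast_surjective) c
    have hmap0 : (a₀ * h i + c₀ * h j - 1).map (Int.castRingHom (ZMod p)) = 0 := by
      simp only [Polynomial.map_sub, Polynomial.map_add, Polynomial.map_mul,
        Polynomial.map_one, hac, sub_self]
    have hdvdC : C (p : ℤ) ∣ (a₀ * h i + c₀ * h j - 1) := by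
      rw [Polynomial.C_dvd_iff_dvd_coeff]
      intro n
      have hcoeff := congrArg (fun q => Polynomial.coeff q n) hmap0
      simp only [Polynomial.coeff_map, Polynomial.coeff_zero] at hcoeff
      exact_mod_cast (ZMod.intCast_zmod_eq_zero_iff_dvd _ p).mp hcoeff
    obtain ⟨w, hw⟩ := hdvdC
    rw [Ideal.eq_top_iff_one]
    have h2 := congrArg (Polynomial.aeval α) hw
    simp only [map_sub, map_add, _root_.map_mul, map_one, aeval_C] at h2
    have h1 : (1 : 𝓞 K) = Polynomial.aeval α a₀ * Polynomial.aeval α (h i)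
        + Polynomial.aeval α c₀ * Polynomial.aeval α (h j) - (p : 𝓞 K) * Polynomial.aeval α w := by
      push_cast at h2
      linear_combination -h2
    rw [h1]
    refine sub_mem (add_mem ?_ ?_) ?_
    · exact Ideal.mem_sup_left (Ideal.mul_mem_left _ _ (hhmem i))
    · exact Ideal.mem_sup_right (Ideal.mul_mem_left _ _ (hhmem j))
    · exact Ideal.mem_sup_left (Ideal.mul_mem_right _ _ (hpmem i))
  constructor
  · exact dvd_iff_emultiplicity_pos.mpr
      ((Ideal.dvd_iff_le).mpr ((Ideal.span_singleton_le_iff_mem _).mpr hβmem))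
  · intro j hji
    rw [emultiplicity_eq_zero]
    intro hdvd
    have hβj : β ∈ 𝔭 j := (Ideal.span_singleton_le_iff_mem _).mp (Ideal.le_of_dvd hdvd)
    have hle : 𝔭 i ≤ 𝔭 j := by
      rw [hgen, Ideal.span_le]
      rintro x hx
      simp only [Set.mem_insert_iff, Set.mem_singleton_iff] at hx
      rcases hx with rfl | rfl
      · exact hpmem j
      · exact hβj
    exact hproper j (by rw [← hcomax j hji, sup_eq_right.mpr hle])
end

section
/- The ordering of nonzero integral ideals of a number field K defined by sorting first by norm, then by the prime-power components at each rational prime (in increasing order of primes, each component sorted by the p-power-norm order), is a total order that is compatible with multiplication: if 𝔞 < 𝔟 then 𝔞𝔠 < 𝔟𝔠 for all nonzero integral ideals 𝔠. -/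
open Ideal NumberField

variable {K : Type*} [Field K] [NumberField K]

/-- The exponent of the prime ideal `q` in the factorization of the nonzero ideal `I`. -/
noncomputable def vP (q I : Ideal (𝓞 K)) : ℕ := (emultiplicity q I).toNat

/-- The `p`-part of an ideal `I`: the product of the powers of the primes above `p`
appearing in the factorization of `I`. -/
noncomputable def pPart (p : ℕ) (I : Ideal (𝓞 K)) : Ideal (𝓞 K) :=
  ∏ᶠ (q : Ideal (𝓞 K)) (_ : q.IsPrime ∧ (p : 𝓞 K) ∈ q ∧ q ≠ ⊥), q ^ (vP q I)

/-- The weight of `I` at `p`: the number of primes above `p` in the factorization of `I`,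
counted with multiplicity. -/
noncomputable def pWeight (p : ℕ) (I : Ideal (𝓞 K)) : ℕ :=
  ∑ᶠ (q : Ideal (𝓞 K)) (_ : q.IsPrime ∧ (p : 𝓞 K) ∈ q ∧ q ≠ ⊥), vP q I

/-- Reverse lexicographic comparison at `p` of exponent vectors, with respect to a strict
order `plt` on the prime ideals: `I` precedes `J` when, at the `plt`-least prime above `p`
where the exponents differ, the exponent of `I` is *larger*. -/
def revLexLt (plt : Ideal (𝓞 K) → Ideal (𝓞 K) → Prop) (p : ℕ) (I J : Ideal (𝓞 K)) : Prop :=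
  ∃ q : Ideal (𝓞 K), q.IsPrime ∧ (p : 𝓞 K) ∈ q ∧ q ≠ ⊥ ∧
    (∀ q' : Ideal (𝓞 K), q'.IsPrime → (p : 𝓞 K) ∈ q' → q' ≠ ⊥ → plt q' q → vP q' I = vP q' J) ∧
    vP q J < vP q I

/-- The order on `p`-parts: first by norm, then by weight, then reverse lexicographically. -/
noncomputable def pLt (plt : Ideal (𝓞 K) → Ideal (𝓞 K) → Prop) (p : ℕ)
    (I J : Ideal (𝓞 K)) : Prop :=
  Ideal.absNorm (pPart p I) < Ideal.absNorm (pPart p J) ∨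
    (Ideal.absNorm (pPart p I) = Ideal.absNorm (pPart p J) ∧
      (pWeight p I < pWeight p J ∨
        (pWeight p I = pWeight p J ∧ revLexLt plt p I J)))

/-- The global order on nonzero integral ideals: first by norm, then at the smallest
rational prime where the `p`-parts differ, by the `p`-power-norm order. -/
noncomputable def idealLt (plt : Ideal (𝓞 K) → Ideal (𝓞 K) → Prop)
    (I J : Ideal (𝓞 K)) : Prop :=
  Ideal.absNorm I < Ideal.absNorm J ∨
    (Ideal.absNorm I = Ideal.absNorm J ∧
      ∃ p : ℕ, p.Prime ∧ (∀ q : ℕ, q.Prime → q < p → pPart q I = pPart q J) ∧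
        pPart p I ≠ pPart p J ∧ pLt plt p I J)

section Lemmas
set_option linter.unusedSectionVars false

open scoped Classical

variable {K : Type*} [Field K] [NumberField K]

local notation "R" => 𝓞 K

/-- `q` lies above the rational prime `p`. -/
def Above (p : ℕ) (q : Ideal (𝓞 K)) : Prop := q.IsPrime ∧ (p : 𝓞 K) ∈ q ∧ q ≠ ⊥

lemma Above.prime {p : ℕ} {q : Ideal (𝓞 K)} (h : Above p q) : Prime q :=
  Ideal.prime_of_isPrime h.2.2 h.1

lemma vP_finite {q I : Ideal (𝓞 K)} (hq : Prime q) (hI : I ≠ ⊥) :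
    FiniteMultiplicity q I :=
  FiniteMultiplicity.of_not_isUnit hq.not_isUnit hI

lemma emultiplicity_eq_vP {q I : Ideal (𝓞 K)} (hq : Prime q) (hI : I ≠ ⊥) :
    emultiplicity q I = (vP q I : ℕ∞) := by
  rw [vP, ENat.coe_toNat (finiteMultiplicity_iff_emultiplicity_ne_top.1 (vP_finite hq hI))]

lemma vP_mul {q I J : Ideal (𝓞 K)} (hq : Prime q) (hI : I ≠ ⊥) (hJ : J ≠ ⊥) :
    vP q (I * J) = vP q I + vP q J := by
  have h : emultiplicity q (I * J) = (↑(vP q I + vP q J) : ℕ∞) := by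
    rw [emultiplicity_mul hq, emultiplicity_eq_vP hq hI, emultiplicity_eq_vP hq hJ]
    push_cast; rfl
  have h2 := emultiplicity_eq_vP hq (mul_ne_zero hI hJ)
  rw [h] at h2
  exact_mod_cast h2.symm

lemma vP_eq_zero_iff {q I : Ideal (𝓞 K)} (hq : Prime q) (hI : I ≠ ⊥) :
    vP q I = 0 ↔ ¬ q ∣ I := by
  rw [← emultiplicity_eq_zero]
  constructor
  · intro h
    rw [emultiplicity_eq_vP hq hI, h]; rfl
  · intro h
    rw [emultiplicity_eq_vP hq hI] at h
    exact_mod_cast h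

end Lemmas
section Lemmas2
set_option linter.unusedSectionVars false

open scoped Classical

variable {K : Type*} [Field K] [NumberField K]

/-- The function whose finprod gives `pPart`. -/
noncomputable def pFun (p : ℕ) (I : Ideal (𝓞 K)) (q : Ideal (𝓞 K)) : Ideal (𝓞 K) :=
  if Above p q then q ^ (vP q I) else 1

lemma pPart_eq_finprod (p : ℕ) (I : Ideal (𝓞 K)) : pPart p I = ∏ᶠ q, pFun p I q := by
  refine finprod_congr fun q => ?_
  rw [finprod_eq_if]
  unfold pFun
  exact if_congr Iff.rfl rfl rfl

lemma divisors_finite {I : Ideal (𝓞 K)} (hI : I ≠ ⊥) :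
    {q : Ideal (𝓞 K) | Prime q ∧ q ∣ I}.Finite := by
  have h := Ideal.finite_factors (R := 𝓞 K) hI
  have : {q : Ideal (𝓞 K) | Prime q ∧ q ∣ I} ⊆
      (fun v : IsDedekindDomain.HeightOneSpectrum (𝓞 K) => v.asIdeal) ''
        {v | v.asIdeal ∣ I} := by
    rintro q ⟨hq, hdvd⟩
    exact ⟨⟨q, Ideal.isPrime_of_prime hq, hq.ne_zero⟩, hdvd, rfl⟩
  exact (h.image _).subset this

lemma pFun_mulSupport {p : ℕ} {I : Ideal (𝓞 K)} (hI : I ≠ ⊥) :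
    (Function.mulSupport (pFun p I)).Finite := by
  refine (divisors_finite hI).subset fun q hq => ?_
  simp only [Function.mem_mulSupport, pFun] at hq
  split_ifs at hq with h
  · refine ⟨h.prime, ?_⟩
    by_contra hd
    rw [(vP_eq_zero_iff h.prime hI).mpr hd, pow_zero] at hq
    exact hq rfl
  · exact absurd rfl hq

lemma emultiplicity_finset_prod {ι : Type*} {q : Ideal (𝓞 K)} (hq : Prime q)
    (s : Finset ι) (f : ι → Ideal (𝓞 K)) :
    emultiplicity q (∏ i ∈ s, f i) = ∑ i ∈ s, emultiplicity q (f i) := by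
  classical
  induction s using Finset.induction_on with
  | empty =>
      simp only [Finset.prod_empty, Finset.sum_empty]
      exact emultiplicity_eq_zero.mpr fun h => hq.not_unit (isUnit_of_dvd_one h)
  | insert _ _ hx ih =>
      rw [Finset.prod_insert hx, Finset.sum_insert hx, emultiplicity_mul hq, ih]

lemma vP_pFun {p : ℕ} {I q q' : Ideal (𝓞 K)} (hq : Above p q) :
    emultiplicity q (pFun p I q') = if q' = q then (vP q I : ℕ∞) else 0 := by
  unfold pFun
  split_ifs with h1 h2 h3
  · subst h2
    exact emultiplicity_pow_self_of_prime hq.prime _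
  · refine emultiplicity_eq_zero.mpr fun hdvd => ?_
    obtain ⟨c, hc⟩ := hq.prime.dvd_of_dvd_pow hdvd
    rcases h1.prime.irreducible.isUnit_or_isUnit hc with h | h
    · exact hq.prime.not_unit h
    · exact h2 (by rw [hc, Ideal.isUnit_iff.mp h, Ideal.mul_top] : q' = q)
  · subst h3
    exact absurd hq h1
  · exact emultiplicity_eq_zero.mpr fun hdvd => hq.prime.not_unit (isUnit_of_dvd_one hdvd)

lemma pPart_ne_bot (p : ℕ) {I : Ideal (𝓞 K)} (hI : I ≠ ⊥) : pPart p I ≠ ⊥ := by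
  rw [pPart_eq_finprod, finprod_eq_prod_of_mulSupport_subset (pFun p I)
    (s := (pFun_mulSupport hI).toFinset)
    (fun x hx => ((pFun_mulSupport hI).mem_toFinset).mpr hx)]
  rw [← Ideal.zero_eq_bot, Finset.prod_ne_zero_iff]
  intro q _
  unfold pFun
  split_ifs with h
  · exact pow_ne_zero _ h.prime.ne_zero
  · exact one_ne_zero

lemma vP_pPart {p : ℕ} {I q : Ideal (𝓞 K)} (hq : Above p q) (hI : I ≠ ⊥) :
    vP q (pPart p I) = vP q I := by
  classical
  have hfin := pFun_mulSupport (p := p) hI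
  set s : Finset (Ideal (𝓞 K)) := insert q hfin.toFinset with hs
  have hsub : Function.mulSupport (pFun p I) ⊆ ↑s := by
    intro x hx
    simp only [hs, Finset.coe_insert, Set.mem_insert_iff]
    exact Or.inr (hfin.mem_toFinset.mpr hx)
  have h1 : emultiplicity q (pPart p I) = (vP q I : ℕ∞) := by
    rw [pPart_eq_finprod, finprod_eq_prod_of_mulSupport_subset _ hsub,
      emultiplicity_finset_prod hq.prime]
    rw [Finset.sum_congr rfl (fun x _ => vP_pFun (I := I) hq (q' := x))]
    rw [Finset.sum_ite_eq' s q (fun _ => (vP q I : ℕ∞))]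
    simp [hs]
  have h2 := emultiplicity_eq_vP hq.prime (pPart_ne_bot p hI)
  rw [h1] at h2
  exact_mod_cast h2.symm

end Lemmas2
section Lemmas3
set_option linter.unusedSectionVars false

open scoped Classical

variable {K : Type*} [Field K] [NumberField K]

lemma pFun_mul {p : ℕ} {I J : Ideal (𝓞 K)} (hI : I ≠ ⊥) (hJ : J ≠ ⊥) (q : Ideal (𝓞 K)) :
    pFun p (I * J) q = pFun p I q * pFun p J q := by
  unfold pFun
  split_ifs with h
  · rw [vP_mul h.prime hI hJ, pow_add]
  · rw [one_mul]

lemma pPart_mul (p : ℕ) {I J : Ideal (𝓞 K)} (hI : I ≠ ⊥) (hJ : J ≠ ⊥) :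
    pPart p (I * J) = pPart p I * pPart p J := by
  rw [pPart_eq_finprod, pPart_eq_finprod, pPart_eq_finprod,
    finprod_congr (pFun_mul hI hJ),
    finprod_mul_distrib (pFun_mulSupport hI) (pFun_mulSupport hJ)]

/-- The function whose finsum gives `pWeight`. -/
noncomputable def wFun (p : ℕ) (I : Ideal (𝓞 K)) (q : Ideal (𝓞 K)) : ℕ :=
  if Above p q then vP q I else 0

lemma pWeight_eq_finsum (p : ℕ) (I : Ideal (𝓞 K)) : pWeight p I = ∑ᶠ q, wFun p I q := by
  refine finsum_congr fun q => ?_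
  rw [finsum_eq_if]
  unfold wFun
  exact if_congr Iff.rfl rfl rfl

lemma wFun_support {p : ℕ} {I : Ideal (𝓞 K)} (hI : I ≠ ⊥) :
    (Function.support (wFun p I)).Finite := by
  refine (divisors_finite hI).subset fun q hq => ?_
  simp only [Function.mem_support, wFun] at hq
  split_ifs at hq with h
  · refine ⟨h.prime, ?_⟩
    by_contra hd
    exact hq ((vP_eq_zero_iff h.prime hI).mpr hd)
  · exact absurd rfl hq

lemma pWeight_mul (p : ℕ) {I J : Ideal (𝓞 K)} (hI : I ≠ ⊥) (hJ : J ≠ ⊥) :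
    pWeight p (I * J) = pWeight p I + pWeight p J := by
  rw [pWeight_eq_finsum, pWeight_eq_finsum, pWeight_eq_finsum, ← finsum_add_distrib
    (wFun_support hI) (wFun_support hJ)]
  refine finsum_congr fun q => ?_
  unfold wFun
  split_ifs with h
  · exact vP_mul h.prime hI hJ
  · rw [add_zero]

lemma pWeight_congr {p : ℕ} {I J : Ideal (𝓞 K)}
    (h : ∀ q, Above p q → vP q I = vP q J) : pWeight p I = pWeight p J := by
  rw [pWeight_eq_finsum, pWeight_eq_finsum]
  refine finsum_congr fun q => ?_
  unfold wFun
  split_ifs with hq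
  · exact h q hq
  · rfl

lemma pPart_congr {p : ℕ} {I J : Ideal (𝓞 K)}
    (h : ∀ q, Above p q → vP q I = vP q J) : pPart p I = pPart p J := by
  rw [pPart_eq_finprod, pPart_eq_finprod]
  refine finprod_congr fun q => ?_
  unfold pFun
  split_ifs with hq
  · rw [h q hq]
  · rfl

lemma eq_of_vP_eq {I J : Ideal (𝓞 K)} (hI : I ≠ ⊥) (hJ : J ≠ ⊥)
    (h : ∀ q : Ideal (𝓞 K), Prime q → vP q I = vP q J) : I = J := by
  classical
  have hnf : UniqueFactorizationMonoid.normalizedFactors I =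
      UniqueFactorizationMonoid.normalizedFactors J := by
    refine Multiset.ext.mpr fun q => ?_
    by_cases hq : Irreducible q
    · have hqp : Prime q := UniqueFactorizationMonoid.irreducible_iff_prime.mp hq
      have hn : normalize q = q := associated_iff_eq.mp (normalize_associated q)
      have e1 := UniqueFactorizationMonoid.emultiplicity_eq_count_normalizedFactors hq hI
      have e2 := UniqueFactorizationMonoid.emultiplicity_eq_count_normalizedFactors hq hJ
      rw [hn, emultiplicity_eq_vP hqp hI] at e1
      rw [hn, emultiplicity_eq_vP hqp hJ] at e2
      have : ((UniqueFactorizationMonoid.normalizedFactors I).count q : ℕ∞) =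
          ((UniqueFactorizationMonoid.normalizedFactors J).count q : ℕ∞) := by
        rw [← e1, ← e2, h q hqp]
      exact_mod_cast this
    · rw [Multiset.count_eq_zero_of_notMem, Multiset.count_eq_zero_of_notMem]
      · exact fun hmem => hq (UniqueFactorizationMonoid.irreducible_of_normalized_factor q hmem)
      · exact fun hmem => hq (UniqueFactorizationMonoid.irreducible_of_normalized_factor q hmem)
  have h1 := UniqueFactorizationMonoid.prod_normalizedFactors hI
  have h2 := UniqueFactorizationMonoid.prod_normalizedFactors hJ
  rw [hnf] at h1
  exact associated_iff_eq.mp (h1.symm.trans h2)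

lemma exists_prime_mem {q : Ideal (𝓞 K)} (hq : q.IsPrime) :
    ∀ n : ℕ, n ≠ 0 → n ≠ 1 → (n : 𝓞 K) ∈ q → ∃ p : ℕ, p.Prime ∧ (p : 𝓞 K) ∈ q := by
  intro n
  induction n using Nat.strong_induction_on with
  | _ n ih =>
    intro h0 h1 hmem
    have hp : n.minFac.Prime := Nat.minFac_prime h1
    have hn : n = n.minFac * (n / n.minFac) := (Nat.mul_div_cancel' n.minFac_dvd).symm
    rw [hn] at hmem
    push_cast at hmem
    rcases hq.mem_or_mem hmem with h | h
    · exact ⟨_, hp, h⟩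
    · have hlt : n / n.minFac < n := Nat.div_lt_self (Nat.pos_of_ne_zero h0) hp.one_lt
      have hne0 : n / n.minFac ≠ 0 := by
        intro hz
        rw [hz, mul_zero] at hn
        exact h0 hn
      by_cases he : n / n.minFac = 1
      · rw [he] at h
        exact absurd ((Ideal.eq_top_iff_one q).mpr (by exact_mod_cast h)) hq.ne_top
      · exact ih _ hlt hne0 he h

lemma exists_above {q : Ideal (𝓞 K)} (hq : q.IsPrime) (hb : q ≠ ⊥) :
    ∃ p : ℕ, p.Prime ∧ Above p q := by
  have h0 : Ideal.absNorm q ≠ 0 := by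
    rw [ne_eq, Ideal.absNorm_eq_zero_iff]
    exact hb
  have h1 : Ideal.absNorm q ≠ 1 := by
    rw [ne_eq, Ideal.absNorm_eq_one_iff]
    exact hq.ne_top
  obtain ⟨p, hp, hmem⟩ := exists_prime_mem hq _ h0 h1 (Ideal.absNorm_mem q)
  exact ⟨p, hp, hq, hmem, hb⟩

lemma above_unique {p p' : ℕ} {q : Ideal (𝓞 K)} (hp : p.Prime) (hp' : p'.Prime)
    (h1 : Above p q) (h2 : Above p' q) : p = p' := by
  by_contra hne
  have hc : IsCoprime (p : ℤ) (p' : ℤ) := by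
    rw [Int.isCoprime_iff_gcd_eq_one]
    exact_mod_cast (Nat.coprime_primes hp hp').mpr hne
  obtain ⟨u, v, huv⟩ := hc
  have hmem : (1 : 𝓞 K) ∈ q := by
    have hcast := congrArg (fun z : ℤ => (z : 𝓞 K)) huv
    push_cast at hcast
    rw [← hcast]
    exact q.add_mem (q.mul_mem_left _ h1.2.1) (q.mul_mem_left _ h2.2.1)
  exact absurd ((Ideal.eq_top_iff_one q).mpr hmem) h1.1.ne_top

end Lemmas3
section Lemmas4
set_option linter.unusedSectionVars false

open scoped Classical

variable {K : Type*} [Field K] [NumberField K]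
variable {plt : Ideal (𝓞 K) → Ideal (𝓞 K) → Prop}

lemma vP_eq_of_pPart_eq {p : ℕ} {J K' : Ideal (𝓞 K)} (hJ : J ≠ ⊥) (hK : K' ≠ ⊥)
    (h : pPart p J = pPart p K') : ∀ q, Above p q → vP q J = vP q K' := fun q hq => by
  rw [← vP_pPart hq hJ, h, vP_pPart hq hK]

lemma pLt_irrefl (p : ℕ) (I : Ideal (𝓞 K)) : ¬ pLt plt p I I := by
  rintro (h | ⟨-, h | ⟨-, q, _, _, _, _, hlt⟩⟩)
  · exact lt_irrefl _ h
  · exact lt_irrefl _ h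
  · exact lt_irrefl _ hlt

lemma revLexLt_trans
    (htrans : ∀ a b c : Ideal (𝓞 K), plt a b → plt b c → plt a c)
    (hirr : ∀ a : Ideal (𝓞 K), ¬ plt a a)
    (htot : ∀ q q' : Ideal (𝓞 K), q.IsPrime → q'.IsPrime → q ≠ ⊥ → q' ≠ ⊥ → q ≠ q' →
      plt q q' ∨ plt q' q)
    {p : ℕ} {I J K' : Ideal (𝓞 K)}
    (h1 : revLexLt plt p I J) (h2 : revLexLt plt p J K') : revLexLt plt p I K' := by
  obtain ⟨q1, hq1p, hq1m, hq1b, hpre1, hlt1⟩ := h1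
  obtain ⟨q2, hq2p, hq2m, hq2b, hpre2, hlt2⟩ := h2
  by_cases heq : q1 = q2
  · subst heq
    exact ⟨q1, hq1p, hq1m, hq1b,
      fun q' h1 h2 h3 hplt => (hpre1 q' h1 h2 h3 hplt).trans (hpre2 q' h1 h2 h3 hplt),
      lt_trans hlt2 hlt1⟩
  · rcases htot q1 q2 hq1p hq2p hq1b hq2b heq with h | h
    · refine ⟨q1, hq1p, hq1m, hq1b, fun q' h1' h2' h3' hplt =>
        (hpre1 q' h1' h2' h3' hplt).trans (hpre2 q' h1' h2' h3' (htrans _ _ _ hplt h)), ?_⟩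
      rw [← hpre2 q1 hq1p hq1m hq1b h]
      exact hlt1
    · refine ⟨q2, hq2p, hq2m, hq2b, fun q' h1' h2' h3' hplt =>
        (hpre1 q' h1' h2' h3' (htrans _ _ _ hplt h)).trans (hpre2 q' h1' h2' h3' hplt), ?_⟩
      rw [hpre1 q2 hq2p hq2m hq2b h]
      exact hlt2

lemma pLt_trans
    (htrans : ∀ a b c : Ideal (𝓞 K), plt a b → plt b c → plt a c)
    (hirr : ∀ a : Ideal (𝓞 K), ¬ plt a a)
    (htot : ∀ q q' : Ideal (𝓞 K), q.IsPrime → q'.IsPrime → q ≠ ⊥ → q' ≠ ⊥ → q ≠ q' →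
      plt q q' ∨ plt q' q)
    {p : ℕ} {I J K' : Ideal (𝓞 K)}
    (h1 : pLt plt p I J) (h2 : pLt plt p J K') : pLt plt p I K' := by
  rcases h1 with hn1 | ⟨hn1, hw1⟩ <;> rcases h2 with hn2 | ⟨hn2, hw2⟩
  · exact Or.inl (lt_trans hn1 hn2)
  · exact Or.inl (hn2 ▸ hn1)
  · exact Or.inl (hn1 ▸ hn2)
  · refine Or.inr ⟨hn1.trans hn2, ?_⟩
    rcases hw1 with hw1 | ⟨hw1, hr1⟩ <;> rcases hw2 with hw2 | ⟨hw2, hr2⟩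
    · exact Or.inl (lt_trans hw1 hw2)
    · exact Or.inl (hw2 ▸ hw1)
    · exact Or.inl (hw1 ▸ hw2)
    · exact Or.inr ⟨hw1.trans hw2, revLexLt_trans htrans hirr htot hr1 hr2⟩

lemma revLexLt_congr_right {p : ℕ} {I J K' : Ideal (𝓞 K)}
    (hv : ∀ q, Above p q → vP q J = vP q K') (h : revLexLt plt p I J) :
    revLexLt plt p I K' := by
  obtain ⟨q, hqp, hqm, hqb, hpre, hlt⟩ := h
  exact ⟨q, hqp, hqm, hqb,
    fun q' h1 h2 h3 hplt => (hpre q' h1 h2 h3 hplt).trans (hv q' ⟨h1, h2, h3⟩),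
    (hv q ⟨hqp, hqm, hqb⟩) ▸ hlt⟩

lemma revLexLt_congr_left {p : ℕ} {I J K' : Ideal (𝓞 K)}
    (hv : ∀ q, Above p q → vP q I = vP q J) (h : revLexLt plt p J K') :
    revLexLt plt p I K' := by
  obtain ⟨q, hqp, hqm, hqb, hpre, hlt⟩ := h
  exact ⟨q, hqp, hqm, hqb,
    fun q' h1 h2 h3 hplt => (hv q' ⟨h1, h2, h3⟩).trans (hpre q' h1 h2 h3 hplt),
    (hv q ⟨hqp, hqm, hqb⟩).symm ▸ hlt⟩

lemma pLt_congr_right {p : ℕ} {I J K' : Ideal (𝓞 K)} (hJ : J ≠ ⊥) (hK : K' ≠ ⊥)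
    (hpp : pPart p J = pPart p K') (h : pLt plt p I J) : pLt plt p I K' := by
  have hv := vP_eq_of_pPart_eq hJ hK hpp
  have hw : pWeight p J = pWeight p K' := pWeight_congr hv
  rcases h with hn | ⟨hn, hw' | ⟨hw', hr⟩⟩
  · exact Or.inl (hpp ▸ hn)
  · exact Or.inr ⟨hpp ▸ hn, Or.inl (hw ▸ hw')⟩
  · exact Or.inr ⟨hpp ▸ hn, Or.inr ⟨hw ▸ hw', revLexLt_congr_right hv hr⟩⟩

lemma pLt_congr_left {p : ℕ} {I J K' : Ideal (𝓞 K)} (hI : I ≠ ⊥) (hJ : J ≠ ⊥)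
    (hpp : pPart p I = pPart p J) (h : pLt plt p J K') : pLt plt p I K' := by
  have hv := vP_eq_of_pPart_eq hI hJ hpp
  have hw : pWeight p I = pWeight p J := pWeight_congr hv
  rcases h with hn | ⟨hn, hw' | ⟨hw', hr⟩⟩
  · exact Or.inl (hpp ▸ hn)
  · exact Or.inr ⟨hpp ▸ hn, Or.inl (hw ▸ hw')⟩
  · exact Or.inr ⟨hpp ▸ hn, Or.inr ⟨hw ▸ hw', revLexLt_congr_left hv hr⟩⟩

lemma exists_plt_min
    (htrans : ∀ a b c : Ideal (𝓞 K), plt a b → plt b c → plt a c)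
    (htot : ∀ q q' : Ideal (𝓞 K), q.IsPrime → q'.IsPrime → q ≠ ⊥ → q' ≠ ⊥ → q ≠ q' →
      plt q q' ∨ plt q' q)
    (s : Finset (Ideal (𝓞 K))) (hgood : ∀ q ∈ s, q.IsPrime ∧ q ≠ ⊥) (hs : s.Nonempty) :
    ∃ q ∈ s, ∀ q' ∈ s, q' ≠ q → plt q q' := by
  classical
  induction s using Finset.induction_on with
  | empty => exact absurd hs (by simp)
  | @insert x t hx ih =>
    rcases t.eq_empty_or_nonempty with rfl | ht
    · refine ⟨x, Finset.mem_insert_self x _, fun q' hq' hne => ?_⟩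
      simp only [Finset.mem_insert, Finset.notMem_empty, or_false] at hq'
      exact absurd hq' hne
    · obtain ⟨q, hq, hmin⟩ := ih (fun a ha => hgood a (Finset.mem_insert_of_mem ha)) ht
      have hqx : q ≠ x := fun h => hx (h ▸ hq)
      have hgq := hgood q (Finset.mem_insert_of_mem hq)
      have hgx := hgood x (Finset.mem_insert_self x t)
      rcases htot q x hgq.1 hgx.1 hgq.2 hgx.2 hqx with h | h
      · refine ⟨q, Finset.mem_insert_of_mem hq, fun q' hq' hne => ?_⟩
        rcases Finset.mem_insert.mp hq' with rfl | hq't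
        · exact h
        · exact hmin q' hq't hne
      · refine ⟨x, Finset.mem_insert_self x t, fun q' hq' hne => ?_⟩
        rcases Finset.mem_insert.mp hq' with rfl | hq't
        · exact absurd rfl hne
        · by_cases hq'q : q' = q
          · exact hq'q ▸ h
          · exact htrans _ _ _ h (hmin q' hq't hq'q)

end Lemmas4
section Lemmas5
set_option synthInstance.maxHeartbeats 1000000
set_option linter.unusedSectionVars false

open scoped Classical

variable {K : Type*} [Field K] [NumberField K]
variable {plt : Ideal (𝓞 K) → Ideal (𝓞 K) → Prop}

lemma pLt_total
    (htrans : ∀ a b c : Ideal (𝓞 K), plt a b → plt b c → plt a c)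
    (hirr : ∀ a : Ideal (𝓞 K), ¬ plt a a)
    (htot : ∀ q q' : Ideal (𝓞 K), q.IsPrime → q'.IsPrime → q ≠ ⊥ → q' ≠ ⊥ → q ≠ q' →
      plt q q' ∨ plt q' q)
    {p : ℕ} {I J : Ideal (𝓞 K)} (hI : I ≠ ⊥) (hJ : J ≠ ⊥)
    (hne : pPart p I ≠ pPart p J) : pLt plt p I J ∨ pLt plt p J I := by
  rcases Nat.lt_trichotomy (Ideal.absNorm (pPart p I)) (Ideal.absNorm (pPart p J)) with
    h | h | h
  · exact Or.inl (Or.inl h)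
  · rcases Nat.lt_trichotomy (pWeight p I) (pWeight p J) with hw | hw | hw
    · exact Or.inl (Or.inr ⟨h, Or.inl hw⟩)
    · -- need revLexLt one way or the other
      have hTfin : {q : Ideal (𝓞 K) | Above p q ∧ vP q I ≠ vP q J}.Finite := by
        refine ((divisors_finite hI).union (divisors_finite hJ)).subset fun q hq => ?_
        obtain ⟨hab, hv⟩ := hq
        by_cases h0 : vP q I = 0
        · refine Or.inr ⟨hab.prime, ?_⟩
          have : vP q J ≠ 0 := fun hz => hv (h0.trans hz.symm)
          exact not_not.mp (fun hd => this ((vP_eq_zero_iff hab.prime hJ).mpr hd))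
        · exact Or.inl ⟨hab.prime,
            not_not.mp (fun hd => h0 ((vP_eq_zero_iff hab.prime hI).mpr hd))⟩
      have hTne : {q : Ideal (𝓞 K) | Above p q ∧ vP q I ≠ vP q J}.Nonempty := by
        rw [Set.nonempty_iff_ne_empty]
        intro hcon
        refine hne (pPart_congr fun q hq => ?_)
        by_contra hv
        have hmem : q ∈ {q : Ideal (𝓞 K) | Above p q ∧ vP q I ≠ vP q J} := ⟨hq, hv⟩
        rw [hcon] at hmem
        exact hmem
      obtain ⟨q, hq, hmin⟩ := exists_plt_min htrans htot hTfin.toFinset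
        (fun q hq => by
          have := hTfin.mem_toFinset.mp hq
          exact ⟨this.1.1, this.1.2.2⟩)
        (by rwa [Set.Finite.toFinset_nonempty])
      have hqmem := hTfin.mem_toFinset.mp hq
      have hpre : ∀ q', q'.IsPrime → (p : 𝓞 K) ∈ q' → q' ≠ ⊥ → plt q' q →
          vP q' I = vP q' J := by
        intro q' h1 h2 h3 hplt
        by_contra hv
        have hq's : q' ∈ hTfin.toFinset := hTfin.mem_toFinset.mpr ⟨⟨h1, h2, h3⟩, hv⟩
        have hq'q : q' ≠ q := fun hcon => hirr q (hcon ▸ hplt)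
        exact hirr q' (htrans _ _ _ hplt (hmin q' hq's hq'q))
      rcases hqmem.2.lt_or_gt with hlt | hlt
      · exact Or.inr (Or.inr ⟨h.symm, Or.inr ⟨hw.symm, q, hqmem.1.1, hqmem.1.2.1,
          hqmem.1.2.2, fun q' a b c d => (hpre q' a b c d).symm, hlt⟩⟩)
      · exact Or.inl (Or.inr ⟨h, Or.inr ⟨hw, q, hqmem.1.1, hqmem.1.2.1,
          hqmem.1.2.2, hpre, hlt⟩⟩)
    · exact Or.inr (Or.inr ⟨h.symm, Or.inl hw⟩)
  · exact Or.inr (Or.inl h)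

lemma pLt_mul {p : ℕ} {I J C : Ideal (𝓞 K)} (hI : I ≠ ⊥) (hJ : J ≠ ⊥) (hC : C ≠ ⊥)
    (h : pLt plt p I J) : pLt plt p (I * C) (J * C) := by
  have hCpos : 0 < Ideal.absNorm (pPart p C) :=
    Nat.pos_of_ne_zero fun hz => (pPart_ne_bot p hC) (Ideal.absNorm_eq_zero_iff.mp hz)
  have hnI : Ideal.absNorm (pPart p (I * C)) =
      Ideal.absNorm (pPart p I) * Ideal.absNorm (pPart p C) := by
    rw [pPart_mul p hI hC]
    exact _root_.map_mul Ideal.absNorm _ _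
  have hnJ : Ideal.absNorm (pPart p (J * C)) =
      Ideal.absNorm (pPart p J) * Ideal.absNorm (pPart p C) := by
    rw [pPart_mul p hJ hC]
    exact _root_.map_mul Ideal.absNorm _ _
  have hwI : pWeight p (I * C) = pWeight p I + pWeight p C := pWeight_mul p hI hC
  have hwJ : pWeight p (J * C) = pWeight p J + pWeight p C := pWeight_mul p hJ hC
  rcases h with hn | ⟨hn, hw | ⟨hw, hr⟩⟩
  · exact Or.inl (by rw [hnI, hnJ]; exact mul_lt_mul_of_pos_right hn hCpos)
  · exact Or.inr ⟨by rw [hnI, hnJ, hn], Or.inl (by rw [hwI, hwJ]; omega)⟩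
  · refine Or.inr ⟨by rw [hnI, hnJ, hn], Or.inr ⟨by rw [hwI, hwJ, hw], ?_⟩⟩
    obtain ⟨q, hqp, hqm, hqb, hpre, hlt⟩ := hr
    refine ⟨q, hqp, hqm, hqb, fun q' h1 h2 h3 hplt => ?_, ?_⟩
    · have hq'pr : Prime q' := Ideal.prime_of_isPrime h3 h1
      rw [vP_mul hq'pr hI hC, vP_mul hq'pr hJ hC, hpre q' h1 h2 h3 hplt]
    · have hqpr : Prime q := Ideal.prime_of_isPrime hqb hqp
      rw [vP_mul hqpr hI hC, vP_mul hqpr hJ hC]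
      omega

end Lemmas5

open scoped Classical
set_option maxHeartbeats 1000000 in
set_option synthInstance.maxHeartbeats 1000000 in
/-- Given any strict total order `plt` on the nonzero prime ideals of a
number field `K` (such as the one defined in the paper), the ordering of nonzero integral
ideals defined by sorting first by norm, then by the prime-power components at each
rational prime (in increasing order of the rational primes, each component compared by the
`p`-power-norm order), is a total order compatible with multiplication: if `𝔞 < 𝔟` then
`𝔞𝔠 < 𝔟𝔠`.  In other words, it makes the nonzero integral ideals a totally ordered
monoid. -/
theorem idealLt_isStrictTotalOrder_and_mul_compat
    (plt : Ideal (𝓞 K) → Ideal (𝓞 K) → Prop)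
    (htrans : ∀ a b c : Ideal (𝓞 K), plt a b → plt b c → plt a c)
    (hirr : ∀ a : Ideal (𝓞 K), ¬ plt a a)
    (htot : ∀ q q' : Ideal (𝓞 K), q.IsPrime → q'.IsPrime → q ≠ ⊥ → q' ≠ ⊥ → q ≠ q' →
      plt q q' ∨ plt q' q) :
    IsStrictTotalOrder {I : Ideal (𝓞 K) // I ≠ ⊥} (fun I J => idealLt plt I.1 J.1) ∧
      ∀ I J C : Ideal (𝓞 K), I ≠ ⊥ → J ≠ ⊥ → C ≠ ⊥ →
        idealLt plt I J → idealLt plt (I * C) (J * C) := by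
  constructor
  · refine { trichotomous := fun a b h1 h2 => (((?_ : ∀ a b : {I : Ideal (𝓞 K) // I ≠ ⊥}, idealLt plt a.1 b.1 ∨ a = b ∨ idealLt plt b.1 a.1) a b).resolve_left h1).resolve_right h2, irrefl := ?_, trans := ?_ }
    · rintro ⟨I, hI⟩ ⟨J, hJ⟩
      by_cases hIJ : I = J
      · exact Or.inr (Or.inl (Subtype.ext hIJ))
      rcases Nat.lt_trichotomy (Ideal.absNorm I) (Ideal.absNorm J) with hn | hn | hn
      · exact Or.inl (Or.inl hn)
      · -- equal norms: find the least rational prime where the p-parts differ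
        have hEx : ∃ p : ℕ, p.Prime ∧ pPart p I ≠ pPart p J := by
          have hq : ∃ q : Ideal (𝓞 K), Prime q ∧ vP q I ≠ vP q J := by
            by_contra hcon
            push_neg at hcon
            exact hIJ (eq_of_vP_eq hI hJ hcon)
          obtain ⟨q, hqpr, hqne⟩ := hq
          obtain ⟨p, hp, habove⟩ := exists_above (Ideal.isPrime_of_prime hqpr) hqpr.ne_zero
          refine ⟨p, hp, fun hcon => hqne ?_⟩
          rw [← vP_pPart habove hI, hcon, vP_pPart habove hJ]
        set p0 := Nat.find hEx with hp0
        obtain ⟨hp0pr, hp0ne⟩ := Nat.find_spec hEx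
        have hp0min : ∀ r : ℕ, r.Prime → r < p0 → pPart r I = pPart r J := by
          intro r hr hlt
          by_contra hcon
          exact Nat.find_min hEx hlt ⟨hr, hcon⟩
        rcases pLt_total htrans hirr htot hI hJ hp0ne with h | h
        · exact Or.inl (Or.inr ⟨hn, p0, hp0pr, hp0min, hp0ne, h⟩)
        · exact Or.inr (Or.inr (Or.inr ⟨hn.symm, p0, hp0pr,
            fun r hr hlt => (hp0min r hr hlt).symm, fun hcon => hp0ne hcon.symm, h⟩))
      · exact Or.inr (Or.inr (Or.inl hn))
    · rintro ⟨I, hI⟩ (h | ⟨-, p, -, -, hne, -⟩)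
      · exact lt_irrefl _ h
      · exact hne rfl
    · rintro ⟨I, hI⟩ ⟨J, hJ⟩ ⟨L, hL⟩ h1 h2
      rcases h1 with hn1 | ⟨hn1, p1, hp1, hpre1, hne1, hplt1⟩ <;>
        rcases h2 with hn2 | ⟨hn2, hrest2⟩
      · exact Or.inl (lt_trans hn1 hn2)
      · exact Or.inl (hn2 ▸ hn1)
      · exact Or.inl (hn1 ▸ hn2)
      · obtain ⟨p2, hp2, hpre2, hne2, hplt2⟩ := hrest2
        refine Or.inr ⟨hn1.trans hn2, ?_⟩
        rcases Nat.lt_trichotomy p1 p2 with hp | hp | hp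
        · have hJL : pPart p1 J = pPart p1 L := hpre2 p1 hp1 hp
          exact ⟨p1, hp1, fun r hr hlt => (hpre1 r hr hlt).trans (hpre2 r hr (hlt.trans hp)),
            fun hcon => hne1 (hcon.trans hJL.symm),
            pLt_congr_right hJ hL hJL hplt1⟩
        · subst hp
          have hne : pPart p1 I ≠ pPart p1 L := by
            intro hcon
            have h2' : pLt plt p1 J I := pLt_congr_right hL hI hcon.symm hplt2
            exact pLt_irrefl p1 I (pLt_trans htrans hirr htot hplt1 h2')
          exact ⟨p1, hp1, fun r hr hlt => (hpre1 r hr hlt).trans (hpre2 r hr hlt),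
            hne, pLt_trans htrans hirr htot hplt1 hplt2⟩
        · have hIJ2 : pPart p2 I = pPart p2 J := hpre1 p2 hp2 hp
          exact ⟨p2, hp2, fun r hr hlt => (hpre1 r hr (hlt.trans hp)).trans (hpre2 r hr hlt),
            fun hcon => hne2 (hIJ2.symm.trans hcon),
            pLt_congr_left hI hJ hIJ2 hplt2⟩
  · intro I J C hI hJ hC hlt
    have hCpos : 0 < Ideal.absNorm C :=
      Nat.pos_of_ne_zero fun hz => hC (Ideal.absNorm_eq_zero_iff.mp hz)
    have hnI : Ideal.absNorm (I * C) = Ideal.absNorm I * Ideal.absNorm C :=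
      _root_.map_mul Ideal.absNorm _ _
    have hnJ : Ideal.absNorm (J * C) = Ideal.absNorm J * Ideal.absNorm C :=
      _root_.map_mul Ideal.absNorm _ _
    rcases hlt with hn | ⟨hn, p, hp, hpre, hne, hplt⟩
    · exact Or.inl (by rw [hnI, hnJ]; exact mul_lt_mul_of_pos_right hn hCpos)
    · refine Or.inr ⟨by rw [hnI, hnJ, hn], p, hp, ?_, ?_, pLt_mul hI hJ hC hplt⟩
      · intro r hr hlt'
        rw [pPart_mul r hI hC, pPart_mul r hJ hC, hpre r hr hlt']
      · intro hcon
        rw [pPart_mul p hI hC, pPart_mul p hJ hC] at hcon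
        exact hne (mul_right_cancel₀ (pPart_ne_bot p hC) hcon)
end
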